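/- Let n ≥ 1 be an integer, let A, B, C ∈ ℝ^{n×n} with A and C invertible, and let u ∈ ℝⁿ be nonzero. Set B₊ := Broyd(B, A, u), B̄ := C(B − A), and B̄₊ := C(B₊ − A). Then ‖B̄₊‖_F ≤ ‖B̄‖_F and ‖B̄₊‖ ≤ ‖B̄‖. -/

import Mathlib

open Matrix

noncomputable def vecNorm {n : ℕ} (u : Fin n → ℝ) : ℝ := Real.sqrt (∑ i, u i ^ 2)

noncomputable def frobNorm {n : ℕ} (M : Matrix (Fin n) (Fin n) ℝ) : ℝ :=
  Real.sqrt (∑ i, ∑ j, M i j ^ 2)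

noncomputable def specNorm {n : ℕ} (M : Matrix (Fin n) (Fin n) ℝ) : ℝ :=
  sSup {r : ℝ | ∃ u : Fin n → ℝ, vecNorm u = 1 ∧ r = vecNorm (M.mulVec u)}

noncomputable def broyd {n : ℕ} (B A : Matrix (Fin n) (Fin n) ℝ) (u : Fin n → ℝ) :
    Matrix (Fin n) (Fin n) ℝ :=
  B + (∑ i, u i ^ 2)⁻¹ • ((A - B) * Matrix.vecMulVec u u)

noncomputable def matCLM {n : ℕ} (M : Matrix (Fin n) (Fin n) ℝ) :
    (Fin n → ℝ) →L[ℝ] (Fin n → ℝ) :=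
  LinearMap.toContinuousLinearMap M.mulVecLin

/-- Key quadratic inequality: subtracting the projection onto `u` decreases the sum of squares. -/
lemma key_sum {n : ℕ} (v u : Fin n → ℝ) (hs : (0:ℝ) < ∑ i, u i ^ 2) :
    ∑ j, (v j - (∑ i, u i ^ 2)⁻¹ * (∑ k, v k * u k) * u j) ^ 2 ≤ ∑ j, v j ^ 2 := by
  set s := ∑ i, u i ^ 2 with hsdef
  set d := ∑ k, v k * u k with hddef
  have h1 : ∑ j, (v j - s⁻¹ * d * u j) ^ 2
      = (∑ j, v j ^ 2) - 2 * (s⁻¹ * d) * (∑ j, v j * u j) + (s⁻¹ * d) ^ 2 * (∑ j, u j ^ 2) := by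
    rw [Finset.sum_congr rfl (fun j _ => by ring :
      ∀ j ∈ Finset.univ, (v j - s⁻¹ * d * u j) ^ 2
        = v j ^ 2 - 2 * (s⁻¹ * d) * (v j * u j) + (s⁻¹ * d) ^ 2 * u j ^ 2)]
    rw [Finset.sum_add_distrib, Finset.sum_sub_distrib, ← Finset.mul_sum, ← Finset.mul_sum]
  rw [h1, ← hddef, ← hsdef]
  have hs' : s ≠ 0 := ne_of_gt hs
  have h2 : 2 * (s⁻¹ * d) * d = 2 * (s⁻¹ * d ^ 2) := by ring
  have h3 : (s⁻¹ * d) ^ 2 * s = s⁻¹ * d ^ 2 := by field_simp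
  rw [h2, h3]
  have h4 : 0 ≤ s⁻¹ * d ^ 2 := by positivity
  linarith

lemma key_mat {n : ℕ} (A B C : Matrix (Fin n) (Fin n) ℝ) (u : Fin n → ℝ) :
    C * (broyd B A u - A)
      = C * (B - A) - (∑ i, u i ^ 2)⁻¹ • ((C * (B - A)) * Matrix.vecMulVec u u) := by
  unfold broyd
  have h : B + (∑ i, u i ^ 2)⁻¹ • ((A - B) * Matrix.vecMulVec u u) - A
      = (B - A) - (∑ i, u i ^ 2)⁻¹ • ((B - A) * Matrix.vecMulVec u u) := by
    have : (A - B) * Matrix.vecMulVec u u = -((B - A) * Matrix.vecMulVec u u) := by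
      rw [← neg_mul, neg_sub]
    rw [this, smul_neg]
    abel
  rw [h, Matrix.mul_sub, Matrix.mul_smul, Matrix.mul_assoc]

lemma entry_eq {n : ℕ} (M : Matrix (Fin n) (Fin n) ℝ) (u : Fin n → ℝ) (c : ℝ) (i j : Fin n) :
    (M - c • (M * Matrix.vecMulVec u u)) i j
      = M i j - c * (∑ k, M i k * u k) * u j := by
  simp [Matrix.sub_apply, Matrix.smul_apply, Matrix.mul_apply, vecMulVec_apply,
    Finset.sum_mul, mul_assoc]

lemma sum_sq_pos {n : ℕ} {u : Fin n → ℝ} (hu : u ≠ 0) : (0:ℝ) < ∑ i, u i ^ 2 := by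
  obtain ⟨j, hj⟩ := Function.ne_iff.mp hu
  exact Finset.sum_pos' (fun i _ => sq_nonneg _)
    ⟨j, Finset.mem_univ j, pow_two_pos_of_ne_zero hj⟩

lemma vecNorm_nonneg {n : ℕ} (u : Fin n → ℝ) : 0 ≤ vecNorm u := Real.sqrt_nonneg _

lemma vecNorm_smul {n : ℕ} (t : ℝ) (u : Fin n → ℝ) : vecNorm (t • u) = |t| * vecNorm u := by
  unfold vecNorm
  rw [show ∑ i, (t • u) i ^ 2 = t ^ 2 * ∑ i, u i ^ 2 by
    rw [Finset.mul_sum]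
    exact Finset.sum_congr rfl fun i _ => by
      simp only [Pi.smul_apply, smul_eq_mul, mul_pow]]
  rw [Real.sqrt_mul (sq_nonneg t), Real.sqrt_sq_eq_abs]

lemma vecNorm_eq_zero {n : ℕ} {u : Fin n → ℝ} (h : vecNorm u = 0) : u = 0 := by
  unfold vecNorm at h
  have h2 := (Real.sqrt_eq_zero (Finset.sum_nonneg fun i _ => sq_nonneg _)).mp h
  funext i
  have h3 := (Finset.sum_eq_zero_iff_of_nonneg (fun i _ => sq_nonneg (u i))).mp h2 i
    (Finset.mem_univ i)
  exact pow_eq_zero_iff (by norm_num) |>.mp h3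

lemma vecNorm_mulVec_le {n : ℕ} (M : Matrix (Fin n) (Fin n) ℝ) (x : Fin n → ℝ) :
    vecNorm (M.mulVec x) ≤ frobNorm M * vecNorm x := by
  unfold vecNorm frobNorm
  rw [← Real.sqrt_mul (Finset.sum_nonneg fun i _ => Finset.sum_nonneg fun j _ => sq_nonneg (M i j) :
    (0:ℝ) ≤ ∑ i, ∑ j, M i j ^ 2)]
  apply Real.sqrt_le_sqrt
  rw [Finset.sum_mul]
  apply Finset.sum_le_sum
  intro i _
  exact Finset.sum_mul_sq_le_sq_mul_sq Finset.univ (fun j => M i j) x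

lemma spec_bddAbove {n : ℕ} (M : Matrix (Fin n) (Fin n) ℝ) :
    BddAbove {r : ℝ | ∃ u : Fin n → ℝ, vecNorm u = 1 ∧ r = vecNorm (M.mulVec u)} := by
  refine ⟨frobNorm M, fun r hr => ?_⟩
  obtain ⟨x, hx, rfl⟩ := hr
  calc vecNorm (M.mulVec x) ≤ frobNorm M * vecNorm x := vecNorm_mulVec_le M x
    _ = frobNorm M := by rw [hx, mul_one]

lemma exists_unit {n : ℕ} (hn : 1 ≤ n) : ∃ e : Fin n → ℝ, vecNorm e = 1 := by
  refine ⟨(Pi.single (⟨0, hn⟩ : Fin n) 1 : Fin n → ℝ), ?_⟩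
  unfold vecNorm
  simp [Pi.single_apply, ite_pow]

lemma spec_nonneg {n : ℕ} (hn : 1 ≤ n) (M : Matrix (Fin n) (Fin n) ℝ) : 0 ≤ specNorm M := by
  obtain ⟨e, he⟩ := exists_unit hn
  exact le_trans (vecNorm_nonneg (M.mulVec e))
    (le_csSup (spec_bddAbove M) ⟨e, he, rfl⟩)

lemma spec_scale {n : ℕ} (M : Matrix (Fin n) (Fin n) ℝ) (y : Fin n → ℝ) :
    vecNorm (M.mulVec y) ≤ specNorm M * vecNorm y := by
  by_cases hy : y = 0
  · subst hy
    simp only [Matrix.mulVec_zero]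
    have : vecNorm (0 : Fin n → ℝ) = 0 := by unfold vecNorm; simp
    rw [this, mul_zero]
  · have ht : 0 < vecNorm y := by
      rcases lt_or_eq_of_le (vecNorm_nonneg y) with h | h
      · exact h
      · exact absurd (vecNorm_eq_zero h.symm) hy
    set t := vecNorm y
    have hz : vecNorm (t⁻¹ • y) = 1 := by
      rw [vecNorm_smul, abs_of_pos (inv_pos.mpr ht), inv_mul_cancel₀ (ne_of_gt ht)]
    have hmem : vecNorm (M.mulVec (t⁻¹ • y)) ≤ specNorm M :=
      le_csSup (spec_bddAbove M) ⟨t⁻¹ • y, hz, rfl⟩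
    have heq : M.mulVec y = t • M.mulVec (t⁻¹ • y) := by
      rw [← Matrix.mulVec_smul, smul_smul, mul_inv_cancel₀ (ne_of_gt ht), one_smul]
    rw [heq, vecNorm_smul, abs_of_pos ht]
    calc t * vecNorm (M.mulVec (t⁻¹ • y)) ≤ t * specNorm M :=
          mul_le_mul_of_nonneg_left hmem ht.le
      _ = specNorm M * t := mul_comm _ _

lemma vecMulVec_mulVec {n : ℕ} (u x : Fin n → ℝ) :
    (vecMulVec u u) *ᵥ x = (∑ k, x k * u k) • u := by
  funext i
  simp only [Matrix.mulVec, dotProduct, vecMulVec_apply, Pi.smul_apply, smul_eq_mul,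
    Finset.sum_mul]
  exact Finset.sum_congr rfl fun j _ => by ring

theorem broyden_update_norm_monotone {n : ℕ} (hn : 1 ≤ n)
    (A B C : Matrix (Fin n) (Fin n) ℝ) (hA : IsUnit A) (hC : IsUnit C)
    (u : Fin n → ℝ) (hu : u ≠ 0) :
    frobNorm (C * (broyd B A u - A)) ≤ frobNorm (C * (B - A)) ∧
    specNorm (C * (broyd B A u - A)) ≤ specNorm (C * (B - A)) := by
  have hs : (0:ℝ) < ∑ i, u i ^ 2 := sum_sq_pos hu
  set s := ∑ i, u i ^ 2 with hsdef
  set M := C * (B - A) with hM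
  have hkey : C * (broyd B A u - A) = M - s⁻¹ • (M * Matrix.vecMulVec u u) := key_mat A B C u
  constructor
  · -- Frobenius norm
    rw [hkey]
    unfold frobNorm
    apply Real.sqrt_le_sqrt
    apply Finset.sum_le_sum
    intro i _
    calc ∑ j, (M - s⁻¹ • (M * Matrix.vecMulVec u u)) i j ^ 2
        = ∑ j, (M i j - s⁻¹ * (∑ k, M i k * u k) * u j) ^ 2 :=
          Finset.sum_congr rfl fun j _ => by rw [entry_eq]
      _ ≤ ∑ j, M i j ^ 2 := key_sum (fun k => M i k) u hs
  · -- spectral norm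
    rw [hkey]
    obtain ⟨e, he⟩ := exists_unit hn
    refine csSup_le ⟨_, ⟨e, he, rfl⟩⟩ ?_
    rintro r ⟨x, hx, rfl⟩
    set w : Fin n → ℝ := x - (s⁻¹ * ∑ k, x k * u k) • u with hw
    have hmv : (M - s⁻¹ • (M * Matrix.vecMulVec u u)) *ᵥ x = M *ᵥ w := by
      rw [Matrix.sub_mulVec, Matrix.smul_mulVec,
        show (M * vecMulVec u u) *ᵥ x = M *ᵥ (vecMulVec u u *ᵥ x) from
          (Matrix.mulVec_mulVec x M _).symm,
        vecMulVec_mulVec, Matrix.mulVec_smul, smul_smul, hw, Matrix.mulVec_sub,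
        Matrix.mulVec_smul]
    have hwle : vecNorm w ≤ 1 := by
      have hle : vecNorm w ≤ vecNorm x := by
        unfold vecNorm
        apply Real.sqrt_le_sqrt
        calc ∑ j, w j ^ 2 = ∑ j, (x j - s⁻¹ * (∑ k, x k * u k) * u j) ^ 2 := by
              refine Finset.sum_congr rfl fun j _ => ?_
              rw [hw]; simp [mul_assoc]
          _ ≤ ∑ j, x j ^ 2 := key_sum x u hs
      rw [hx] at hle; exact hle
    rw [hmv]
    calc vecNorm (M *ᵥ w) ≤ specNorm M * vecNorm w := spec_scale M w
      _ ≤ specNorm M * 1 := mul_le_mul_of_nonneg_left hwle (spec_nonneg hn M)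
      _ = specNorm M := mul_one _
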